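/- Let S be a spider of order n with k ≥ 3 legs and y legs of length 2. Then γ_tR(S) = n if y ≥ k-1; γ_tR(S) = n - k + y + 1 if 1 ≤ y < k-1; and γ_tR(S) = n - k + 2 if y = 0. -/

import Mathlib

/-- A total Roman dominating function: values in {0,1,2}, every vertex with value 0
has a neighbour with value 2, and vertices with positive value are not isolated in
the induced subgraph of positive-value vertices. -/
def TRDF {V : Type*} (G : SimpleGraph V) (f : V → ℕ) : Prop :=
  (∀ v, f v ≤ 2) ∧
  (∀ v, f v = 0 → ∃ u, G.Adj v u ∧ f u = 2) ∧
  (∀ v, 0 < f v → ∃ u, G.Adj v u ∧ 0 < f u)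

/-- The total Roman domination number. -/
noncomputable def trdn {V : Type*} [Fintype V] (G : SimpleGraph V) : ℕ :=
  sInf {w | ∃ f : V → ℕ, TRDF G f ∧ w = ∑ v, f v}

/-- The graph `G + uv`. -/
def addEdge {V : Type*} (G : SimpleGraph V) (u v : V) : SimpleGraph V :=
  G ⊔ SimpleGraph.fromEdgeSet {s(u, v)}

/-- `G` has no isolated vertices. -/
def NoIsolated {V : Type*} (G : SimpleGraph V) : Prop := ∀ v, ∃ u, G.Adj v u

/-- The spider Sp(l 0, ..., l (k-1)): head `none`; vertex `some ⟨i, j⟩` is the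
vertex at distance `j + 1` from the head on leg `i` (which has length `l i`). -/
def spider (k : ℕ) (l : Fin k → ℕ) : SimpleGraph (Option (Σ i : Fin k, Fin (l i))) where
  Adj a b :=
    match a, b with
    | none, none => False
    | none, some ⟨_, j⟩ => (j : ℕ) = 0
    | some ⟨_, j⟩, none => (j : ℕ) = 0
    | some ⟨i, j⟩, some ⟨i', j'⟩ =>
        (i : ℕ) = (i' : ℕ) ∧ ((j : ℕ) + 1 = (j' : ℕ) ∨ (j' : ℕ) + 1 = (j : ℕ))
  symm := by
    constructor
    rintro (_ | ⟨i, j⟩) (_ | ⟨i', j'⟩) h <;> simp_all <;> omega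
  loopless := by
    constructor
    rintro (_ | ⟨i, j⟩) h <;> simp_all

section Aux

variable {k : ℕ} {l : Fin k → ℕ}

lemma legLB (m : ℕ) : ∀ (a : ℕ) (g : ℕ → ℕ),
    (∀ j, j < m → g j ≤ 2) →
    (∀ j, j < m → g j = 0 →
      (j = 0 ∧ a = 2) ∨ (1 ≤ j ∧ g (j-1) = 2) ∨ (j+1 < m ∧ g (j+1) = 2)) →
    (∀ j, j < m → 1 ≤ g j →
      (j = 0 ∧ 1 ≤ a) ∨ (1 ≤ j ∧ 1 ≤ g (j-1)) ∨ (j+1 < m ∧ 1 ≤ g (j+1))) →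
    ((a = 0 → m = 1 → False) ∧
     (a = 2 → m - 1 ≤ ∑ j ∈ Finset.range m, g j ∧
        (m = 2 → 2 ≤ ∑ j ∈ Finset.range m, g j)) ∧
     (a ≤ 1 → m ≤ ∑ j ∈ Finset.range m, g j) ∧
     (a = 2 → 1 ≤ g 0 → m ≤ ∑ j ∈ Finset.range m, g j) ∧
     (a = 0 → g 0 = 2 → 1 ≤ m → m + 1 ≤ ∑ j ∈ Finset.range m, g j)) := by
  induction m with
  | zero => intro a g _ _ _; simp
  | succ m ih =>
    intro a g hb hz hp
    have hb' : ∀ j, j < m → (fun j => g (j+1)) j ≤ 2 := fun j hj => hb (j+1) (by omega)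
    have hz' : ∀ j, j < m → (fun j => g (j+1)) j = 0 →
        (j = 0 ∧ g 0 = 2) ∨ (1 ≤ j ∧ (fun j => g (j+1)) (j-1) = 2) ∨
        (j+1 < m ∧ (fun j => g (j+1)) (j+1) = 2) := by
      intro j hj h0
      rcases hz (j+1) (by omega) h0 with ⟨h, _⟩ | ⟨h1, h2⟩ | ⟨h1, h2⟩
      · omega
      · rcases Nat.eq_zero_or_pos j with rfl | hjpos
        · exact Or.inl ⟨rfl, by simpa using h2⟩
        · refine Or.inr (Or.inl ⟨hjpos, ?_⟩)
          have hje : j - 1 + 1 = j := by omega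
          simpa [hje] using h2
      · exact Or.inr (Or.inr ⟨by omega, by simpa using h2⟩)
    have hp' : ∀ j, j < m → 1 ≤ (fun j => g (j+1)) j →
        (j = 0 ∧ 1 ≤ g 0) ∨ (1 ≤ j ∧ 1 ≤ (fun j => g (j+1)) (j-1)) ∨
        (j+1 < m ∧ 1 ≤ (fun j => g (j+1)) (j+1)) := by
      intro j hj h0
      rcases hp (j+1) (by omega) h0 with ⟨h, _⟩ | ⟨h1, h2⟩ | ⟨h1, h2⟩
      · omega
      · rcases Nat.eq_zero_or_pos j with rfl | hjpos
        · exact Or.inl ⟨rfl, by simpa using h2⟩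
        · refine Or.inr (Or.inl ⟨hjpos, ?_⟩)
          have hje : j - 1 + 1 = j := by omega
          simpa [hje] using h2
      · exact Or.inr (Or.inr ⟨by omega, by simpa using h2⟩)
    obtain ⟨ih0, ih1, ih23, ih4, ih5⟩ := ih (g 0) (fun j => g (j+1)) hb' hz' hp'
    have hsum : ∑ j ∈ Finset.range (m+1), g j
        = (∑ j ∈ Finset.range m, g (j+1)) + g 0 := Finset.sum_range_succ' g m
    have hg0 : g 0 ≤ 2 := hb 0 (by omega)
    have hd0 : g 0 = 0 → a = 2 ∨ (1 ≤ m ∧ g 1 = 2) := by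
      intro h
      rcases hz 0 (by omega) h with ⟨_, h2⟩ | ⟨h1, _⟩ | ⟨h1, h2⟩
      · exact Or.inl h2
      · omega
      · exact Or.inr ⟨by omega, h2⟩
    have hd1 : 1 ≤ g 0 → 1 ≤ a ∨ (1 ≤ m ∧ 1 ≤ g 1) := by
      intro h
      rcases hp 0 (by omega) h with ⟨_, h2⟩ | ⟨h1, _⟩ | ⟨h1, h2⟩
      · exact Or.inl h2
      · omega
      · exact Or.inr ⟨by omega, h2⟩
    have hcase : g 0 = 0 ∨ g 0 = 1 ∨ g 0 = 2 := by omega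
    refine ⟨?_, ?_, ?_, ?_, ?_⟩
    · intro ha hm1
      have hm : m = 0 := by omega
      rcases hcase with h | h | h
      · rcases hd0 h with h2 | ⟨h1, _⟩ <;> omega
      · rcases hd1 (by omega) with h2 | ⟨h1, _⟩ <;> omega
      · rcases hd1 (by omega) with h2 | ⟨h1, _⟩ <;> omega
    · intro ha
      rcases hcase with h | h | h
      · rcases Nat.eq_zero_or_pos m with rfl | hm
        · simp [hsum, h]
        · rcases Nat.lt_or_ge m 2 with hm2 | hm2
          · exact absurd (ih0 h (by omega)) (fun c => c)
          · have := ih23 (by omega)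
            constructor <;> omega
      · have := ih23 (by omega)
        constructor <;> omega
      · have := ih1 h
        constructor <;> omega
    · intro ha
      rcases hcase with h | h | h
      · rcases hd0 h with h2 | ⟨h1, h2⟩
        · omega
        · have := ih5 h (by simpa using h2) h1
          omega
      · have := ih23 (by omega)
        omega
      · have := ih1 h
        omega
    · intro ha hg
      rcases hcase with h | h | h
      · omega
      · have := ih23 (by omega)
        omega
      · have := ih1 h
        omega
    · intro ha hg _
      rcases hd1 (by omega) with h2 | ⟨h1, h2⟩
      · omega
      · have := ih4 hg (by simpa using h2)
        omega

lemma spider_adj_ns (i : Fin k) (j : Fin (l i)) :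
    (spider k l).Adj none (some ⟨i, j⟩) ↔ (j : ℕ) = 0 := Iff.rfl

lemma spider_adj_sn (i : Fin k) (j : Fin (l i)) :
    (spider k l).Adj (some ⟨i, j⟩) none ↔ (j : ℕ) = 0 := Iff.rfl

lemma spider_adj_nn : ¬ (spider k l).Adj none none := fun h => h

lemma spider_adj_ss (i i' : Fin k) (j : Fin (l i)) (j' : Fin (l i')) :
    (spider k l).Adj (some ⟨i, j⟩) (some ⟨i', j'⟩) ↔
      ((i : ℕ) = (i' : ℕ) ∧ ((j : ℕ) + 1 = (j' : ℕ) ∨ (j' : ℕ) + 1 = (j : ℕ))) := Iff.rfl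

lemma sum_decomp (f : (Option (Σ i : Fin k, Fin (l i))) → ℕ)
    (g : Fin k → ℕ → ℕ)
    (hg : ∀ i (j : ℕ) (h : j < l i), g i j = f (some ⟨i, ⟨j, h⟩⟩)) :
    ∑ v, f v = f none + ∑ i, ∑ j ∈ Finset.range (l i), g i j := by
  rw [Fintype.sum_option]
  congr 1
  rw [← Finset.univ_sigma_univ, Finset.sum_sigma]
  refine Finset.sum_congr rfl fun i _ => ?_
  rw [← Fin.sum_univ_eq_sum_range (fun j => g i j) (l i)]
  exact Finset.sum_congr rfl fun j _ => (hg i j j.isLt).symm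

lemma sum_ite_range (m : ℕ) :
    ∑ j ∈ Finset.range m, (if j = 0 then 0 else 1) = m - 1 := by
  induction m with
  | zero => simp
  | succ m ih =>
    rw [Finset.sum_range_succ, ih]
    rcases Nat.eq_zero_or_pos m with rfl | hm
    · simp
    · rw [if_neg (by omega)]
      omega

lemma upper_allones (hk : 3 ≤ k) (hl : ∀ i, 1 ≤ l i) :
    ∃ f : Option (Σ i : Fin k, Fin (l i)) → ℕ,
      TRDF (spider k l) f ∧ ∑ v, f v = 1 + ∑ i, l i := by
  refine ⟨fun _ => 1, ⟨fun v => one_le_two, fun v h => absurd h one_ne_zero, ?_⟩, ?_⟩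
  · rintro (_ | ⟨i, j⟩) -
    · exact ⟨some ⟨⟨0, by omega⟩, ⟨0, hl _⟩⟩, rfl, one_pos⟩
    · rcases Nat.eq_zero_or_pos (j : ℕ) with h | h
      · exact ⟨none, h, one_pos⟩
      · exact ⟨some ⟨i, ⟨(j : ℕ) - 1, by omega⟩⟩,
          ⟨rfl, Or.inr (by show (j : ℕ) - 1 + 1 = (j : ℕ); omega)⟩, one_pos⟩
  · rw [Finset.sum_const, smul_eq_mul, mul_one, Finset.card_univ]
    simp only [Fintype.card_option, Fintype.card_sigma, Fintype.card_fin]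
    omega

def patternF {k : ℕ} {l : Fin k → ℕ} (A : Finset (Fin k)) :
    Option (Σ i : Fin k, Fin (l i)) → ℕ
  | none => 2
  | some ⟨i, j⟩ => if i ∈ A then 1 else if (j : ℕ) = 0 then 0 else 1

lemma upper_pattern (hk : 3 ≤ k) (hl : ∀ i, 1 ≤ l i) (A : Finset (Fin k))
    (hA : A.Nonempty) (hA2 : ∀ i, i ∉ A → l i ≠ 2) :
    ∃ f : Option (Σ i : Fin k, Fin (l i)) → ℕ,
      TRDF (spider k l) f ∧ ∑ v, f v = 2 + (∑ i, (l i - 1)) + A.card := by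
  classical
  have hfn : (patternF A : Option (Σ i : Fin k, Fin (l i)) → ℕ) none = 2 := rfl
  have hfs : ∀ (i : Fin k) (j : Fin (l i)),
      patternF A (some ⟨i, j⟩) = if i ∈ A then 1 else if (j : ℕ) = 0 then 0 else 1 :=
    fun _ _ => rfl
  refine ⟨patternF A, ⟨?_, ?_, ?_⟩, ?_⟩
  · rintro (_ | ⟨i, j⟩)
    · exact le_of_eq hfn
    · rw [hfs]
      split_ifs <;> omega
  · rintro (_ | ⟨i, j⟩) h0
    · rw [hfn] at h0; exact absurd h0 (by norm_num)
    · rw [hfs] at h0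
      have h0' : i ∉ A ∧ (j : ℕ) = 0 := by
        by_contra hc
        revert h0
        split_ifs <;> simp_all
      exact ⟨none, h0'.2, hfn⟩
  · rintro (_ | ⟨i, j⟩) h0
    · obtain ⟨i1, hi1⟩ := hA
      refine ⟨some ⟨i1, ⟨0, hl i1⟩⟩, rfl, ?_⟩
      rw [hfs, if_pos hi1]; omega
    · rcases Nat.eq_zero_or_pos (j : ℕ) with hj | hj
      · exact ⟨none, hj, by rw [hfn]; omega⟩
      · by_cases hiA : i ∈ A
        · refine ⟨some ⟨i, ⟨(j : ℕ) - 1, by omega⟩⟩,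
            ⟨rfl, Or.inr (by show (j : ℕ) - 1 + 1 = (j : ℕ); omega)⟩, ?_⟩
          rw [hfs, if_pos hiA]; omega
        · have hli : 3 ≤ l i := by
            have h2 := hA2 i hiA
            have hjl := j.isLt
            omega
          rcases Nat.lt_or_ge (j : ℕ) 2 with hj2 | hj2
          · refine ⟨some ⟨i, ⟨2, by omega⟩⟩,
              ⟨rfl, Or.inl (by show (j : ℕ) + 1 = 2; omega)⟩, ?_⟩
            rw [hfs, if_neg hiA, if_neg (by show ¬((2 : ℕ) = 0); omega)]
            omega
          · refine ⟨some ⟨i, ⟨(j : ℕ) - 1, by omega⟩⟩,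
              ⟨rfl, Or.inr (by show (j : ℕ) - 1 + 1 = (j : ℕ); omega)⟩, ?_⟩
            rw [hfs, if_neg hiA, if_neg (by show ¬((j : ℕ) - 1 = 0); omega)]
            omega
  · rw [sum_decomp _ (fun i jn => if i ∈ A then 1 else if jn = 0 then 0 else 1)
      (fun i jn h => rfl), hfn]
    have hleg : ∀ i : Fin k,
        (∑ jn ∈ Finset.range (l i), (if i ∈ A then 1 else if jn = 0 then 0 else 1))
          = (l i - 1) + (if i ∈ A then 1 else 0) := by
      intro i
      by_cases hiA : i ∈ A
      · simp only [if_pos hiA]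
        rw [Finset.sum_const, Finset.card_range, smul_eq_mul, mul_one]
        have := hl i; omega
      · simp only [if_neg hiA]
        rw [sum_ite_range]
        omega
    rw [Finset.sum_congr rfl (fun i _ => hleg i), Finset.sum_add_distrib]
    have hcard : (∑ i : Fin k, (if i ∈ A then 1 else 0)) = A.card := by
      rw [Finset.sum_ite_mem, Finset.univ_inter, Finset.sum_const, smul_eq_mul, mul_one]
    rw [hcard]
    omega

end Aux

theorem stmt15 (k : ℕ) (hk : 3 ≤ k) (l : Fin k → ℕ) (hl : ∀ i, 1 ≤ l i)
    (y n : ℕ) (hy : y = (Finset.univ.filter (fun i => l i = 2)).card)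
    (hn : n = 1 + ∑ i, l i) :
    trdn (spider k l) =
      if k - 1 ≤ y then n else if 1 ≤ y then n - k + y + 1 else n - k + 2 := by
  classical
  have hyk : y ≤ k := by
    rw [hy]
    exact le_trans (Finset.card_filter_le _ _) (by simp)
  have hsl : ∑ i : Fin k, l i = (∑ i : Fin k, (l i - 1)) + k := by
    have h1 : ∑ i : Fin k, l i = ∑ i : Fin k, ((l i - 1) + 1) :=
      Finset.sum_congr rfl fun i _ => by have := hl i; omega
    rw [h1, Finset.sum_add_distrib, Finset.sum_const, Finset.card_univ, Fintype.card_fin,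
      smul_eq_mul, mul_one]
  set M := ∑ i : Fin k, (l i - 1) with hM
  -- upper bound witness
  have hupper : ∃ f : Option (Σ i : Fin k, Fin (l i)) → ℕ, TRDF (spider k l) f ∧
      (if k - 1 ≤ y then n else if 1 ≤ y then n - k + y + 1 else n - k + 2) = ∑ v, f v := by
    by_cases h1 : k - 1 ≤ y
    · obtain ⟨f, hf, hs⟩ := upper_allones hk hl
      exact ⟨f, hf, by rw [if_pos h1, hs, hn]⟩
    · by_cases h2 : 1 ≤ y
      · obtain ⟨f, hf, hs⟩ := upper_pattern hk hl (Finset.univ.filter (fun i => l i = 2))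
          (Finset.card_pos.mp (by omega)) (fun i hi => by simpa using hi)
        refine ⟨f, hf, ?_⟩
        rw [if_neg h1, if_pos h2, hs, ← hy]
        omega
      · have hall : ∀ i, l i ≠ 2 := by
          intro i hi
          have : i ∈ Finset.univ.filter (fun i => l i = 2) :=
            Finset.mem_filter.mpr ⟨Finset.mem_univ _, hi⟩
          have hcard : 1 ≤ (Finset.univ.filter (fun i => l i = 2)).card :=
            Finset.card_pos.mpr ⟨i, this⟩
          omega
        obtain ⟨f, hf, hs⟩ := upper_pattern hk hl {⟨0, by omega⟩}
          (Finset.singleton_nonempty _) (fun i _ => hall i)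
        refine ⟨f, hf, ?_⟩
        rw [if_neg h1, if_neg h2, hs, Finset.card_singleton]
        omega
  obtain ⟨f0, hf0, hw0⟩ := hupper
  -- lower bound
  have hlb : ∀ w ∈ {w | ∃ f : Option (Σ i : Fin k, Fin (l i)) → ℕ,
      TRDF (spider k l) f ∧ w = ∑ v, f v},
      (if k - 1 ≤ y then n else if 1 ≤ y then n - k + y + 1 else n - k + 2) ≤ w := by
    rintro w ⟨f, ⟨hb, hz, hp⟩, rfl⟩
    set g : Fin k → ℕ → ℕ :=
      fun i j => if h : j < l i then f (some ⟨i, ⟨j, h⟩⟩) else 0 with hgdef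
    have hgf : ∀ i (j : ℕ) (h : j < l i), g i j = f (some ⟨i, ⟨j, h⟩⟩) :=
      fun i j h => dif_pos h
    have hsum := sum_decomp f g hgf
    set a := f none with hadef
    have hbi : ∀ i : Fin k, ∀ j, j < l i → g i j ≤ 2 := by
      intro i j hj
      rw [hgf i j hj]; exact hb _
    have hzi : ∀ i : Fin k, ∀ j, j < l i → g i j = 0 →
        (j = 0 ∧ a = 2) ∨ (1 ≤ j ∧ g i (j-1) = 2) ∨ (j+1 < l i ∧ g i (j+1) = 2) := by
      intro i j hj h0
      rw [hgf i j hj] at h0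
      obtain ⟨u, hadj, hu⟩ := hz _ h0
      rcases u with _ | ⟨i', j'⟩
      · exact Or.inl ⟨(spider_adj_sn i ⟨j, hj⟩).mp hadj, hu⟩
      · obtain ⟨hi, hjj⟩ := (spider_adj_ss i i' ⟨j, hj⟩ j').mp hadj
        have hii : i = i' := Fin.ext hi
        subst hii
        rcases hjj with h1 | h1
        · have h1' : j + 1 = (j' : ℕ) := h1
          have hlt : j + 1 < l i := h1' ▸ j'.isLt
          refine Or.inr (Or.inr ⟨hlt, ?_⟩)
          rw [hgf i (j+1) hlt]
          have he : (⟨j+1, hlt⟩ : Fin (l i)) = j' := Fin.ext h1'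
          rw [he]; exact hu
        · have h1' : (j' : ℕ) + 1 = j := h1
          have hlt : j - 1 < l i := by have := j'.isLt; omega
          refine Or.inr (Or.inl ⟨by omega, ?_⟩)
          rw [hgf i (j-1) hlt]
          have he : (⟨j-1, hlt⟩ : Fin (l i)) = j' := Fin.ext (by
            show j - 1 = (j' : ℕ); omega)
          rw [he]; exact hu
    have hpi : ∀ i : Fin k, ∀ j, j < l i → 1 ≤ g i j →
        (j = 0 ∧ 1 ≤ a) ∨ (1 ≤ j ∧ 1 ≤ g i (j-1)) ∨ (j+1 < l i ∧ 1 ≤ g i (j+1)) := by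
      intro i j hj h0
      rw [hgf i j hj] at h0
      obtain ⟨u, hadj, hu⟩ := hp _ h0
      rcases u with _ | ⟨i', j'⟩
      · exact Or.inl ⟨(spider_adj_sn i ⟨j, hj⟩).mp hadj, hu⟩
      · obtain ⟨hi, hjj⟩ := (spider_adj_ss i i' ⟨j, hj⟩ j').mp hadj
        have hii : i = i' := Fin.ext hi
        subst hii
        rcases hjj with h1 | h1
        · have h1' : j + 1 = (j' : ℕ) := h1
          have hlt : j + 1 < l i := h1' ▸ j'.isLt
          refine Or.inr (Or.inr ⟨hlt, ?_⟩)
          rw [hgf i (j+1) hlt]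
          have he : (⟨j+1, hlt⟩ : Fin (l i)) = j' := Fin.ext h1'
          rw [he]; exact hu
        · have h1' : (j' : ℕ) + 1 = j := h1
          have hlt : j - 1 < l i := by have := j'.isLt; omega
          refine Or.inr (Or.inl ⟨by omega, ?_⟩)
          rw [hgf i (j-1) hlt]
          have he : (⟨j-1, hlt⟩ : Fin (l i)) = j' := Fin.ext (by
            show j - 1 = (j' : ℕ); omega)
          rw [he]; exact hu
    have hC := fun i : Fin k => legLB (l i) a (g i) (hbi i) (hzi i) (hpi i)
    have hhz : a = 0 → ∃ i0 : Fin k, g i0 0 = 2 := by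
      intro h0
      obtain ⟨u, hadj, hu⟩ := hz none h0
      rcases u with _ | ⟨i', j'⟩
      · exact absurd hadj spider_adj_nn
      · have hj0 : (j' : ℕ) = 0 := hadj
        refine ⟨i', ?_⟩
        rw [hgf i' 0 (hl i')]
        have he : (⟨0, hl i'⟩ : Fin (l i')) = j' := Fin.ext hj0.symm
        rw [he]; exact hu
    have hhp : 1 ≤ a → ∃ i0 : Fin k, 1 ≤ g i0 0 := by
      intro h0
      obtain ⟨u, hadj, hu⟩ := hp none h0
      rcases u with _ | ⟨i', j'⟩
      · exact absurd hadj spider_adj_nn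
      · have hj0 : (j' : ℕ) = 0 := hadj
        refine ⟨i', ?_⟩
        rw [hgf i' 0 (hl i')]
        have he : (⟨0, hl i'⟩ : Fin (l i')) = j' := Fin.ext hj0.symm
        rw [he]; exact hu
    rw [hsum]
    have ha2 : a ≤ 2 := hb none
    have hcase : a = 0 ∨ a = 1 ∨ a = 2 := by omega
    rcases hcase with ha | ha | ha
    · -- a = 0 : weight ≥ n
      obtain ⟨i0, hi0⟩ := hhz ha
      have h2 : l i0 + 1 ≤ ∑ j ∈ Finset.range (l i0), g i0 j :=
        (hC i0).2.2.2.2 ha hi0 (hl i0)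
      have h3 : ∑ i : Fin k, ∑ j ∈ Finset.range (l i), g i j
          = (∑ j ∈ Finset.range (l i0), g i0 j) +
            ∑ i ∈ Finset.univ.erase i0, ∑ j ∈ Finset.range (l i), g i j :=
        (Finset.add_sum_erase _ _ (Finset.mem_univ i0)).symm
      have h4 : ∑ i ∈ Finset.univ.erase i0, l i
          ≤ ∑ i ∈ Finset.univ.erase i0, ∑ j ∈ Finset.range (l i), g i j :=
        Finset.sum_le_sum fun i _ => (hC i).2.2.1 (by omega)
      have h5 : ∑ i : Fin k, l i = l i0 + ∑ i ∈ Finset.univ.erase i0, l i :=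
        (Finset.add_sum_erase _ _ (Finset.mem_univ i0)).symm
      split_ifs <;> omega
    · -- a = 1 : weight ≥ n
      have h4 : ∑ i : Fin k, l i ≤ ∑ i : Fin k, ∑ j ∈ Finset.range (l i), g i j :=
        Finset.sum_le_sum fun i _ => (hC i).2.2.1 (by omega)
      split_ifs <;> omega
    · -- a = 2
      have hB : ∀ i ∈ (Finset.univ : Finset (Fin k)),
          (l i - 1) + (if l i = 2 then 1 else 0) ≤ ∑ j ∈ Finset.range (l i), g i j := by
        intro i _
        have hc := (hC i).2.1 ha
        split_ifs with h
        · have := hc.2 h; omega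
        · have := hc.1; omega
      have h5 : ∑ i : Fin k, ((l i - 1) + (if l i = 2 then 1 else 0)) = M + y := by
        rw [Finset.sum_add_distrib, hy]
        congr 1
        rw [Finset.card_filter]
      obtain ⟨i0, hi0⟩ := hhp (by omega)
      have h6 : l i0 ≤ ∑ j ∈ Finset.range (l i0), g i0 j := (hC i0).2.2.2.1 ha hi0
      have h7 : l i0 = 2 → 1 ≤ y := by
        intro h
        rw [hy]
        exact Finset.card_pos.mpr ⟨i0, Finset.mem_filter.mpr ⟨Finset.mem_univ _, h⟩⟩
      have h3 : ∑ i : Fin k, ∑ j ∈ Finset.range (l i), g i j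
          = (∑ j ∈ Finset.range (l i0), g i0 j) +
            ∑ i ∈ Finset.univ.erase i0, ∑ j ∈ Finset.range (l i), g i j :=
        (Finset.add_sum_erase _ _ (Finset.mem_univ i0)).symm
      have h4 : ∑ i ∈ Finset.univ.erase i0, ((l i - 1) + (if l i = 2 then 1 else 0))
          ≤ ∑ i ∈ Finset.univ.erase i0, ∑ j ∈ Finset.range (l i), g i j :=
        Finset.sum_le_sum fun i hi => hB i (Finset.mem_univ i)
      have h8 : ∑ i : Fin k, ((l i - 1) + (if l i = 2 then 1 else 0))
          = ((l i0 - 1) + (if l i0 = 2 then 1 else 0)) +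
            ∑ i ∈ Finset.univ.erase i0, ((l i - 1) + (if l i = 2 then 1 else 0)) :=
        (Finset.add_sum_erase _ _ (Finset.mem_univ i0)).symm
      have hli0 := hl i0
      rcases eq_or_ne (l i0) 2 with he2 | he2
      · rw [if_pos he2] at h8
        have hy1 := h7 he2
        split_ifs <;> omega
      · rw [if_neg he2] at h8
        split_ifs <;> omega
  have hmem : (if k - 1 ≤ y then n else if 1 ≤ y then n - k + y + 1 else n - k + 2) ∈
      {w | ∃ f : Option (Σ i : Fin k, Fin (l i)) → ℕ,
        TRDF (spider k l) f ∧ w = ∑ v, f v} := ⟨f0, hf0, hw0⟩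
  exact le_antisymm (Nat.sInf_le hmem) (le_csInf ⟨_, hmem⟩ hlb)
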